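/- Let F : ℝ² → ℝ² be a lift of a homeomorphism f of the two-torus homotopic to the identity. Suppose f is non-wandering and ρ(F) has non-empty interior. Then no point of the chaotic region C(f) is (1/2)-Lyapunov stable; that is, for every z ∈ C(f) and every δ > 0 there exist n ∈ ℕ and a point w ∈ B_δ(z) with d(f^n(w), f^n(z)) > 1/2. -/

import Mathlib

noncomputable section
open Filter Topology Metric Set MeasureTheory

/-- Euclidean space `ℝ^d`. -/
abbrev E (d : ℕ) := EuclideanSpace ℝ (Fin d)

/-- The integer lattice `ℤ^d` as an additive subgroup of `ℝ^d`. -/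
def ZLat (d : ℕ) : AddSubgroup (E d) where
  carrier := {z | ∀ i, ∃ m : ℤ, z i = (m : ℝ)}
  zero_mem' := fun i => ⟨0, by simp⟩
  add_mem' := by
    intro x y hx hy i
    obtain ⟨m, hm⟩ := hx i
    obtain ⟨n, hn⟩ := hy i
    exact ⟨m + n, by simp [PiLp.add_apply, hm, hn]⟩
  neg_mem' := by
    intro x hx i
    obtain ⟨m, hm⟩ := hx i
    exact ⟨-m, by simp [PiLp.neg_apply, hm]⟩

/-- The torus `T^d = ℝ^d / ℤ^d`. -/
abbrev T (d : ℕ) := E d ⧸ ZLat d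

/-- The canonical projection `π : ℝ^d → T^d`. -/
def tpi (d : ℕ) : E d → T d := QuotientAddGroup.mk

/-- The set of rotation vectors of orbit segments starting in `W ⊆ ℝ^d`:
`{ρ | ∃ nᵢ → ∞, zᵢ ∈ W, (F^{nᵢ}(zᵢ) - zᵢ)/nᵢ → ρ}`. -/
def rotRel {d : ℕ} (F : E d → E d) (W : Set (E d)) : Set (E d) :=
  {ρ | ∃ (n : ℕ → ℕ) (z : ℕ → E d),
    Tendsto n atTop atTop ∧ (∀ i, z i ∈ W) ∧
    Tendsto (fun i => (n i : ℝ)⁻¹ • (F^[n i] (z i) - z i)) atTop (𝓝 ρ)}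

/-- The Misiurewicz–Ziemian rotation set `ρ(F)` of a lift `F`. -/
def rotSet {d : ℕ} (F : E d → E d) : Set (E d) := rotRel F Set.univ

/-- The rotation subset `ρ_U(F)` for `U ⊆ T^d` (starting points in `π⁻¹(U)`). -/
def rotU {d : ℕ} (F : E d → E d) (U : Set (T d)) : Set (E d) :=
  rotRel F (tpi d ⁻¹' U)

/-- `F` is a lift of the torus homeomorphism `f` (which is then homotopic to the
identity, as expressed by commutation with the deck translations). -/
def IsLift {d : ℕ} (F : E d ≃ₜ E d) (f : T d ≃ₜ T d) : Prop :=
  (∀ z : E d, tpi d (F z) = f (tpi d z)) ∧ ∀ z : E d, ∀ m ∈ ZLat d, F (z + m) = F z + m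

/-- `U ⊆ T^d` is bounded: the connected components of `π⁻¹(U)` are bounded. -/
def BoundedSet {d : ℕ} (U : Set (T d)) : Prop :=
  ∀ z ∈ tpi d ⁻¹' U, Bornology.IsBounded (connectedComponentIn (tpi d ⁻¹' U) z)

/-- `U ⊆ T^d` is recurrent: `f^n(U) ∩ U ≠ ∅` for infinitely many `n ≥ 1`. -/
def Recurrent {d : ℕ} (f : T d ≃ₜ T d) (U : Set (T d)) : Prop :=
  {n : ℕ | 1 ≤ n ∧ ((⇑f)^[n] '' U ∩ U).Nonempty}.Infinite

/-- The Euclidean scalar product `⟨z, v⟩` in `ℝ²`. -/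
def sdot (v z : E 2) : ℝ := z 0 * v 0 + z 1 * v 1

/-- `⟨z, v^⊥⟩` where `v^⊥ = (-v₂, v₁)`. -/
def pdot (v z : E 2) : ℝ := z 1 * v 0 - z 0 * v 1

/-- The affine line `L_{λ,v} = λv + {v}^⊥ = {z | ⟨z,v⟩ = λ⟨v,v⟩}`. -/
def lineL (lam : ℝ) (v : E 2) : Set (E 2) := {z | sdot v z = lam * sdot v v}

/-- A vector of `ℝ²` is rational if both coordinates are rational. -/
def RatVec (z : E 2) : Prop := (∃ q : ℚ, z 0 = (q : ℝ)) ∧ ∃ q : ℚ, z 1 = (q : ℝ)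

instance ZLat_closed (d : ℕ) : IsClosed ((ZLat d : AddSubgroup (E d)) : Set (E d)) := by
  have h : ((ZLat d : AddSubgroup (E d)) : Set (E d)) =
      ⋂ i, (fun z : E d => z i) ⁻¹' (Set.range ((↑) : ℤ → ℝ)) := by
    ext z
    simp only [Set.mem_iInter, Set.mem_preimage, Set.mem_range]
    constructor
    · intro hz i; obtain ⟨m, hm⟩ := hz i; exact ⟨m, hm.symm⟩
    · intro hz i; obtain ⟨m, hm⟩ := hz i; exact ⟨m, hm.symm⟩
  rw [h]
  exact isClosed_iInter fun i =>
    Int.isClosedEmbedding_coe_real.isClosed_range.preimage (EuclideanSpace.proj i).continuous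


namespace NoLyap

lemma norm_tpi (x : E 2) : ‖tpi 2 x‖ = Metric.infDist x ((ZLat 2 : AddSubgroup (E 2)) : Set (E 2)) :=
  QuotientAddGroup.norm_mk x

lemma tpi_sub (a b : E 2) : tpi 2 (a - b) = tpi 2 a - tpi 2 b := by
  simp [tpi]

lemma dist_tpi (a b : E 2) : dist (tpi 2 a) (tpi 2 b) = ‖tpi 2 (a - b)‖ := by
  rw [dist_eq_norm, tpi_sub]

lemma tpi_eq_zero_iff (x : E 2) : tpi 2 x = 0 ↔ x ∈ ZLat 2 :=
  QuotientAddGroup.eq_zero_iff x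

lemma norm_tpi_le (x : E 2) : ‖tpi 2 x‖ ≤ ‖x‖ :=
  QuotientAddGroup.norm_mk_le_norm

/-- Every coset has a representative of minimal norm. -/
lemma exists_min_rep (x : T 2) : ∃ a : E 2, tpi 2 a = x ∧ ‖a‖ = ‖x‖ := by
  obtain ⟨y, rfl⟩ := QuotientAddGroup.mk_surjective x
  have hy : ((y : E 2) : T 2) = tpi 2 y := rfl
  rw [hy] at *
  obtain ⟨s, hs, hds⟩ := (ZLat_closed 2).exists_infDist_eq_dist
    ⟨0, (ZLat 2).zero_mem⟩ y
  refine ⟨y - s, ?_, ?_⟩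
  · rw [tpi_sub, sub_eq_self, tpi_eq_zero_iff] at *
    exact hs
  · rw [norm_tpi, hds, dist_eq_norm]

lemma norm_sq_two (v : E 2) : ‖v‖^2 = (v 0)^2 + (v 1)^2 := by
  rw [EuclideanSpace.norm_eq, Real.sq_sqrt (by positivity)]
  simp [Fin.sum_univ_two, Real.norm_eq_abs, sq_abs]

lemma zlat_mem_iff (m : E 2) : m ∈ ZLat 2 ↔ ∀ i, ∃ k : ℤ, m i = (k : ℝ) := Iff.rfl

lemma one_le_norm_lat {m : E 2} (hm : m ∈ ZLat 2) (h0 : m ≠ 0) : 1 ≤ ‖m‖ := by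
  have h1 : ∃ i, m i ≠ 0 := by
    by_contra h
    push_neg at h
    exact h0 (by ext i; simpa using h i)
  obtain ⟨i, hi⟩ := h1
  obtain ⟨k, hk⟩ := (zlat_mem_iff m).1 hm i
  have hk0 : k ≠ 0 := by rintro rfl; simp at hk; exact hi hk
  have h2 : (1 : ℝ) ≤ (m i)^2 := by
    rw [hk]
    have : 1 ≤ k^2 := by nlinarith [Int.one_le_abs hk0, sq_abs k]
    have h := (Int.cast_le (R := ℝ)).2 this
    push_cast at h
    exact h
  have h3 : (1:ℝ) ≤ ‖m‖^2 := by
    rw [EuclideanSpace.norm_eq, Real.sq_sqrt (by positivity)]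
    have h4 := Finset.single_le_sum (f := fun j => ‖m j‖^2)
      (fun j _ => by positivity) (Finset.mem_univ i)
    have h4' : ‖m i‖ ^ 2 ≤ ∑ j, ‖m j‖ ^ 2 := h4
    have h5 : ‖m i‖^2 = (m i)^2 := sq_abs _
    linarith [h4', h5]
  nlinarith [norm_nonneg m]

lemma norm_sq_le_of_norm_le {v : E 2} {r : ℝ} (h : ‖v‖ ≤ r) : (v 0)^2 + (v 1)^2 ≤ r^2 := by
  have h2 := norm_sq_two v
  nlinarith [norm_nonneg v]

lemma int_mul_pred_nonneg (a : ℤ) : (0:ℝ) ≤ (a:ℝ) * ((a:ℝ) - 1) := by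
  have : 0 ≤ a * (a - 1) := by
    rcases le_or_gt a 0 with h | h
    · have h2 : 0 ≤ (-a) * (1 - a) := mul_nonneg (by omega) (by omega)
      nlinarith [h2]
    · exact mul_nonneg (by omega) (by omega)
  exact_mod_cast this

set_option maxHeartbeats 1000000 in
/-- An open set contained in the union of the closed 1/2-balls centred at `c` + lattice
cannot contain a point lying in two of these balls. -/
lemma no_touch {U : Set (E 2)} (hU : IsOpen U) {c x : E 2}
    (hUK : ∀ y ∈ U, ∃ m ∈ ZLat 2, ‖y - c - m‖ ≤ 1/2)
    (hxU : x ∈ U) (hx : ‖x - c‖ ≤ 1/2) {m : E 2} (hm : m ∈ ZLat 2) (hm0 : m ≠ 0) :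
    1/2 < ‖x - c - m‖ := by
  by_contra hcon
  push_neg at hcon
  obtain ⟨p, hp⟩ := (zlat_mem_iff m).1 hm 0
  obtain ⟨q, hq⟩ := (zlat_mem_iff m).1 hm 1
  set a0 : ℝ := (x - c) 0 with ha0
  set a1 : ℝ := (x - c) 1 with ha1
  have hA : a0^2 + a1^2 ≤ (1/2)^2 := norm_sq_le_of_norm_le hx
  have hBc0 : (x - c - m) 0 = a0 - p := by simp [ha0, hp, PiLp.sub_apply]
  have hBc1 : (x - c - m) 1 = a1 - q := by simp [ha1, hq, PiLp.sub_apply]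
  have hB : (a0 - p)^2 + (a1 - q)^2 ≤ (1/2)^2 := by
    have := norm_sq_le_of_norm_le hcon
    rwa [hBc0, hBc1] at this
  -- ‖m‖ = 1, i.e. p² + q² = 1
  have hm1 : (1:ℝ) ≤ (p:ℝ)^2 + (q:ℝ)^2 := by
    have h1 := one_le_norm_lat hm hm0
    have h2 := norm_sq_two m
    rw [hp, hq] at h2
    nlinarith
  have e1 : (p:ℝ)^2 = 2*(a0-p)^2 + 2*a0^2 - (2*a0-p)^2 := by ring
  have e2 : (q:ℝ)^2 = 2*(a1-q)^2 + 2*a1^2 - (2*a1-q)^2 := by ring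
  have hpq : (p:ℝ)^2 + (q:ℝ)^2 = 1 := by
    have g1 := sq_nonneg (2*a0 - p)
    have g2 := sq_nonneg (2*a1 - q)
    linarith
  -- equality case: x - c = m/2
  have hexp : (a0 - p)^2 + (a1 - q)^2
      = (a0^2 + a1^2) - 2*(a0*p + a1*q) + ((p:ℝ)^2 + (q:ℝ)^2) := by ring
  have hTlow : a0*p + a1*q ≥ (a0^2 + a1^2)/2 + 3/8 := by
    rw [hpq] at hexp; linarith
  have hident : (a0*p + a1*q)^2 + (a0*q - a1*p)^2 = (a0^2 + a1^2) * ((p:ℝ)^2 + (q:ℝ)^2) := by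
    ring
  have hcs : (a0*p + a1*q)^2 ≤ a0^2 + a1^2 := by
    rw [hpq, mul_one] at hident
    nlinarith [sq_nonneg (a0*q - a1*p)]
  have k1 : (a0*p + a1*q)^2 - 2*(a0*p + a1*q) + 3/4 ≤ 0 := by linarith
  have hTge : a0*p + a1*q ≥ 1/2 := by
    linarith [sq_nonneg (a0*p + a1*q - 1/2)]
  have hs_ge : a0^2 + a1^2 ≥ 1/4 := by
    linarith [sq_nonneg (a0*p + a1*q - 1/2)]
  have hs14 : a0^2 + a1^2 = 1/4 := by linarith
  have hTle : a0*p + a1*q ≤ 1/2 := by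
    linarith [sq_nonneg (a0*p + a1*q - 1/2)]
  have hgoal_id : (a0 - p/2)^2 + (a1 - q/2)^2
      = (a0^2 + a1^2) - (a0*p + a1*q) + ((p:ℝ)^2 + (q:ℝ)^2)/4 := by ring
  have hsq0 : (a0 - p/2)^2 + (a1 - q/2)^2 ≤ 0 := by
    rw [hgoal_id, hpq, hs14]; linarith
  have he0 : a0 = (p:ℝ)/2 := by
    have q1 : (a0 - p/2)^2 = 0 :=
      le_antisymm (by linarith [sq_nonneg (a1 - q/2)]) (sq_nonneg _)
    have := pow_eq_zero_iff (n := 2) (by norm_num) |>.1 q1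
    linarith [sub_eq_zero.1 this]
  have he1 : a1 = (q:ℝ)/2 := by
    have q1 : (a1 - q/2)^2 = 0 :=
      le_antisymm (by linarith [sq_nonneg (a0 - p/2)]) (sq_nonneg _)
    have := pow_eq_zero_iff (n := 2) (by norm_num) |>.1 q1
    linarith [sub_eq_zero.1 this]
  -- move in the perpendicular direction
  obtain ⟨r, hr0, hrU⟩ := Metric.isOpen_iff.1 hU x hxU
  set t : ℝ := min (r/2) (1/2) with ht
  have ht0 : 0 < t := by positivity
  have ht1 : t < 1 := lt_of_le_of_lt (min_le_right _ _) (by norm_num)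
  have htr : t < r := lt_of_le_of_lt (min_le_left _ _) (by linarith)
  set e : E 2 := EuclideanSpace.single 0 (-(q:ℝ)) + EuclideanSpace.single 1 (p:ℝ) with he
  have he0' : e 0 = -(q:ℝ) := by
    simp [he, PiLp.add_apply, EuclideanSpace.single_apply]
  have he1' : e 1 = (p:ℝ) := by
    simp [he, PiLp.add_apply, EuclideanSpace.single_apply]
  have hne : ‖e‖ = 1 := by
    have h2 := norm_sq_two e
    rw [he0', he1'] at h2
    have h3 : ‖e‖^2 = 1 := by rw [h2]; linarith [hpq]
    calc ‖e‖ = Real.sqrt (‖e‖^2) := (Real.sqrt_sq (norm_nonneg e)).symm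
    _ = 1 := by rw [h3, Real.sqrt_one]
  set y : E 2 := x + t • e with hy
  have hyU : y ∈ U := by
    apply hrU
    have hd : dist y x = t := by
      rw [dist_eq_norm, hy, add_sub_cancel_left, norm_smul, hne]
      simp [abs_of_pos ht0]
    rwa [Metric.mem_ball, hd]
  obtain ⟨m'', hm'', hym⟩ := hUK y hyU
  obtain ⟨P, hP⟩ := (zlat_mem_iff m'').1 hm'' 0
  obtain ⟨Q, hQ⟩ := (zlat_mem_iff m'').1 hm'' 1
  have hxc0 : x 0 - c 0 = a0 := by rw [ha0]; simp [PiLp.sub_apply]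
  have hxc1 : x 1 - c 1 = a1 := by rw [ha1]; simp [PiLp.sub_apply]
  have hyc0 : (y - c - m'') 0 = (p:ℝ)/2 - t*q - P := by
    have : (y - c - m'') 0 = x 0 + t * e 0 - c 0 - m'' 0 := by
      simp [hy, PiLp.sub_apply, PiLp.add_apply, PiLp.smul_apply, smul_eq_mul]
      try ring
    rw [this, he0', hP]
    linarith [he0 ▸ hxc0]
  have hyc1 : (y - c - m'') 1 = (q:ℝ)/2 + t*p - Q := by
    have : (y - c - m'') 1 = x 1 + t * e 1 - c 1 - m'' 1 := by
      simp [hy, PiLp.sub_apply, PiLp.add_apply, PiLp.smul_apply, smul_eq_mul]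
      try ring
    rw [this, he1', hQ]
    linarith [he1 ▸ hxc1]
  have hC : ((p:ℝ)/2 - t*q - P)^2 + ((q:ℝ)/2 + t*p - Q)^2 ≤ (1/2)^2 := by
    have := norm_sq_le_of_norm_le hym
    rwa [hyc0, hyc1] at this
  have hid : ((p:ℝ)/2 - t*q - (P:ℝ))^2 + ((q:ℝ)/2 + t*p - (Q:ℝ))^2 - 1/4
      = (t - ((p:ℝ)*Q - (q:ℝ)*P))^2
        + ((p:ℝ)*P + (q:ℝ)*Q)*(((p:ℝ)*P + (q:ℝ)*Q) - 1) := by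
    linear_combination (1/4 + t^2 - (P:ℝ)^2 - (Q:ℝ)^2) * hpq
  have halpha := int_mul_pred_nonneg (p*P + q*Q)
  push_cast at halpha
  have htb : (t - ((p:ℝ)*Q - (q:ℝ)*P))^2 ≤ 0 := by
    linarith [hid, hC, halpha]
  have h0' : (t - ((p:ℝ)*Q - (q:ℝ)*P))^2 = 0 :=
    le_antisymm htb (sq_nonneg _)
  have htb' : t = (p:ℝ)*Q - (q:ℝ)*P := by
    have := pow_eq_zero_iff (n := 2) (by norm_num) |>.1 h0'
    linarith [sub_eq_zero.1 this]
  have hbeta : ((p*Q - q*P : ℤ) : ℝ) = t := by push_cast; linarith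
  have hb1 : (0:ℤ) < p*Q - q*P := by
    have : (0:ℝ) < ((p*Q - q*P : ℤ) : ℝ) := by rw [hbeta]; exact ht0
    exact_mod_cast this
  have hb2 : p*Q - q*P < 1 := by
    have : ((p*Q - q*P : ℤ) : ℝ) < 1 := by rw [hbeta]; exact ht1
    exact_mod_cast this
  omega

def Lat0 : Set (E 2) := {m : E 2 | m ∈ ZLat 2 ∧ m ≠ 0}

lemma lat0_closed : IsClosed Lat0 := by
  have h : Lat0 = ((ZLat 2 : AddSubgroup (E 2)) : Set (E 2)) ∩ (Metric.ball (0 : E 2) 1)ᶜ := by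
    ext m
    simp only [Lat0, Set.mem_setOf_eq, Set.mem_inter_iff, Set.mem_compl_iff,
      Metric.mem_ball, dist_zero_right, not_lt, SetLike.mem_coe]
    constructor
    · rintro ⟨h1, h2⟩; exact ⟨h1, one_le_norm_lat h1 h2⟩
    · rintro ⟨h1, h2⟩
      refine ⟨h1, fun h0 => ?_⟩
      rw [h0] at h2; simp at h2; linarith
  rw [h]
  exact (ZLat_closed 2).inter Metric.isOpen_ball.isClosed_compl

lemma lat0_nonempty : Lat0.Nonempty := by
  refine ⟨EuclideanSpace.single 0 (1:ℝ), ?_, ?_⟩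
  · intro i
    by_cases h : i = 0
    · exact ⟨1, by simp [h, EuclideanSpace.single_apply]⟩
    · exact ⟨0, by simp [EuclideanSpace.single_apply, h]⟩
  · intro h
    have h1 := congrArg (fun v : E 2 => v 0) h
    simp [EuclideanSpace.single_apply] at h1

lemma local_ball {U : Set (E 2)} (hU : IsOpen U) {c x : E 2}
    (hUK : ∀ y ∈ U, ∃ m ∈ ZLat 2, ‖y - c - m‖ ≤ 1/2)
    (hxU : x ∈ U) (hx : ‖x - c‖ ≤ 1/2) :
    ∃ ε > 0, ∀ p ∈ U, ‖p - x‖ < ε → ‖p - c‖ ≤ 1/2 := by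
  obtain ⟨m₀, hm₀, hdm₀⟩ := lat0_closed.exists_infDist_eq_dist lat0_nonempty (x - c)
  have hgt : 1/2 < Metric.infDist (x - c) Lat0 := by
    rw [hdm₀, dist_eq_norm]
    exact no_touch hU hUK hxU hx hm₀.1 hm₀.2
  refine ⟨Metric.infDist (x - c) Lat0 - 1/2, by linarith, ?_⟩
  intro pp hpU hpx
  obtain ⟨m, hm, hpm⟩ := hUK pp hpU
  by_cases h0 : m = 0
  · rw [h0] at hpm; simpa using hpm
  · exfalso
    have h1 : Metric.infDist (x - c) Lat0 ≤ dist (x - c) m :=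
      Metric.infDist_le_dist_of_mem ⟨hm, h0⟩
    have h2 : dist (x - c) m = ‖x - c - m‖ := dist_eq_norm _ _
    have h3 : ‖x - c - m‖ ≤ ‖x - pp‖ + ‖pp - c - m‖ := by
      have : x - c - m = (x - pp) + (pp - c - m) := by abel
      rw [this]; exact norm_add_le _ _
    have h4 : ‖x - pp‖ = ‖pp - x‖ := norm_sub_rev _ _
    linarith

lemma conn_subset {U : Set (E 2)} (hU : IsOpen U) (hconn : IsPreconnected U) {c : E 2}
    (hcU : c ∈ U)
    (hUK : ∀ y ∈ U, ∃ m ∈ ZLat 2, ‖y - c - m‖ ≤ 1/2) :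
    ∀ y ∈ U, ‖y - c‖ ≤ 1/2 := by
  by_contra hcon
  push_neg at hcon
  obtain ⟨y₀, hy₀U, hy₀⟩ := hcon
  have hloc : ∀ x : E 2, ∃ ε : ℝ, 0 < ε ∧ ((x ∈ U ∧ ‖x - c‖ ≤ 1/2) →
      ∀ p ∈ U, ‖p - x‖ < ε → ‖p - c‖ ≤ 1/2) := by
    intro x
    by_cases hx : x ∈ U ∧ ‖x - c‖ ≤ 1/2
    · obtain ⟨ε, hε, h⟩ := local_ball hU hUK hx.1 hx.2
      exact ⟨ε, hε, fun _ => h⟩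
    · exact ⟨1, one_pos, fun h => absurd h hx⟩
  choose ε hε0 hεp using hloc
  set A : Set (E 2) := ⋃ x ∈ {x | x ∈ U ∧ ‖x - c‖ ≤ 1/2}, Metric.ball x (ε x) with hA
  set B : Set (E 2) := {p : E 2 | 1/2 < ‖p - c‖} with hB
  have hAopen : IsOpen A := isOpen_biUnion (fun _ _ => Metric.isOpen_ball)
  have hBopen : IsOpen B := by
    have h : B = (fun p : E 2 => ‖p - c‖) ⁻¹' (Set.Ioi (1/2)) := rfl
    rw [h]
    exact IsOpen.preimage (continuous_norm.comp (continuous_id.sub continuous_const))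
      isOpen_Ioi
  have hcover : U ⊆ A ∪ B := by
    intro y hy
    rcases le_or_gt ‖y - c‖ (1/2) with h | h
    · exact Or.inl (Set.mem_biUnion (⟨hy, h⟩ : y ∈ {x | x ∈ U ∧ ‖x - c‖ ≤ 1/2})
        (Metric.mem_ball_self (hε0 y)))
    · exact Or.inr h
  have h1 : (U ∩ A).Nonempty :=
    ⟨c, hcU, Set.mem_biUnion (⟨hcU, by simp⟩ : c ∈ {x | x ∈ U ∧ ‖x - c‖ ≤ 1/2})
      (Metric.mem_ball_self (hε0 c))⟩
  have h2 : (U ∩ B).Nonempty := ⟨y₀, hy₀U, hy₀⟩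
  obtain ⟨q, hqU, hqA, hqB⟩ := hconn A B hAopen hBopen hcover h1 h2
  obtain ⟨x, hxP, hqball⟩ := Set.mem_iUnion₂.1 hqA
  have h5 : ‖q - x‖ < ε x := by
    rw [← dist_eq_norm]; exact hqball
  have h6 := hεp x hxP q hqU h5
  exact absurd h6 (not_le.2 hqB)

lemma isOpenMap_iterate (F : E 2 ≃ₜ E 2) (n : ℕ) : IsOpenMap (⇑F)^[n] := by
  induction n with
  | zero => simpa using IsOpenMap.id
  | succ k ih =>
    rw [Function.iterate_succ']
    exact F.isOpenMap.comp ih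

section Lift

variable {F : E 2 ≃ₜ E 2} {f : T 2 ≃ₜ T 2}

lemma tpi_iterate (hlift : IsLift F f) (k : ℕ) (x : E 2) :
    tpi 2 ((⇑F)^[k] x) = (⇑f)^[k] (tpi 2 x) := by
  induction k with
  | zero => simp
  | succ k ih =>
    rw [Function.iterate_succ_apply', Function.iterate_succ_apply', hlift.1, ih]

lemma iterate_lat (hlift : IsLift F f) (k : ℕ) (x : E 2) {m : E 2} (hm : m ∈ ZLat 2) :
    (⇑F)^[k] (x + m) = (⇑F)^[k] x + m := by
  induction k with
  | zero => simp
  | succ k ih =>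
    rw [Function.iterate_succ_apply', Function.iterate_succ_apply', ih, hlift.2 _ m hm]

lemma dist_tpi_le (a b : E 2) : dist (tpi 2 a) (tpi 2 b) ≤ ‖a - b‖ := by
  rw [dist_tpi]; exact norm_tpi_le _

lemma tpi_add (a b : E 2) : tpi 2 (a + b) = tpi 2 a + tpi 2 b := by
  simp [tpi]

/-- Step A: under the (1/2)-stability assumption, lifted orbits of the lifted ball
track the orbit of `zh` within distance 1/2 in the plane. -/
lemma stepA (hlift : IsLift F f) {z : T 2} {zh : E 2} (hzh : tpi 2 zh = z) {δ : ℝ}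
    (hδ : 0 < δ)
    (hst : ∀ n : ℕ, ∀ w ∈ Metric.ball z δ, dist ((⇑f)^[n] w) ((⇑f)^[n] z) ≤ 1/2)
    (n : ℕ) : ∀ w ∈ Metric.ball zh δ, ‖(⇑F)^[n] w - (⇑F)^[n] zh‖ ≤ 1/2 := by
  have key : ∀ y ∈ (⇑F)^[n] '' Metric.ball zh δ, ‖y - (⇑F)^[n] zh‖ ≤ 1/2 := by
    apply conn_subset
    · exact isOpenMap_iterate F n _ Metric.isOpen_ball
    · exact ((convex_ball zh δ).isPreconnected).image _
        ((F.continuous.iterate n).continuousOn)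
    · exact ⟨zh, Metric.mem_ball_self hδ, rfl⟩
    · rintro y ⟨w, hw, rfl⟩
      have hwz : tpi 2 w ∈ Metric.ball z δ := by
        rw [Metric.mem_ball, ← hzh]
        calc dist (tpi 2 w) (tpi 2 zh) ≤ ‖w - zh‖ := dist_tpi_le _ _
        _ < δ := by rw [← dist_eq_norm]; exact hw
      have h1 := hst n (tpi 2 w) hwz
      rw [← hzh, ← tpi_iterate hlift, ← tpi_iterate hlift, dist_tpi] at h1
      obtain ⟨a, ha, hna⟩ := exists_min_rep (tpi 2 ((⇑F)^[n] w - (⇑F)^[n] zh))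
      refine ⟨(⇑F)^[n] w - (⇑F)^[n] zh - a, ?_, ?_⟩
      · rw [← tpi_eq_zero_iff, tpi_sub, ha, sub_self]
      · have : (⇑F)^[n] w - (⇑F)^[n] zh - ((⇑F)^[n] w - (⇑F)^[n] zh - a) = a := by abel
        rw [this, hna]
        exact h1
  intro w hw
  exact key _ ⟨w, hw, rfl⟩

/-- The return relation: a return of the ball to itself forces the orbit of `zh`
to satisfy an approximate translation relation. -/
lemma return_rel (hlift : IsLift F f) {z : T 2} {zh : E 2} (hzh : tpi 2 zh = z) {δ : ℝ}
    (hδ : 0 < δ)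
    (hst : ∀ n : ℕ, ∀ w ∈ Metric.ball z δ, dist ((⇑f)^[n] w) ((⇑f)^[n] z) ≤ 1/2)
    {n : ℕ} {v : T 2} (hv : v ∈ Metric.ball z δ) (hfv : (⇑f)^[n] v ∈ Metric.ball z δ) :
    ∃ m ∈ ZLat 2, ∀ k : ℕ, ‖(⇑F)^[k + n] zh - (⇑F)^[k] zh - m‖ ≤ 1 := by
  obtain ⟨y, hy, hny⟩ := exists_min_rep (v - z)
  set vh := zh + y with hvh
  have hvt : tpi 2 vh = v := by
    rw [hvh, tpi_add, hzh, hy]; abel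
  have hvball : vh ∈ Metric.ball zh δ := by
    rw [Metric.mem_ball, dist_eq_norm, hvh, add_sub_cancel_left, hny, ← dist_eq_norm]
    exact hv
  have h1 : ∀ k : ℕ, ‖(⇑F)^[k] vh - (⇑F)^[k] zh‖ ≤ 1/2 :=
    fun k => stepA hlift hzh hδ hst k vh hvball
  -- the return point
  obtain ⟨y', hy', hny'⟩ := exists_min_rep ((⇑f)^[n] v - z)
  have hm : (⇑F)^[n] vh - zh - y' ∈ ZLat 2 := by
    rw [← tpi_eq_zero_iff, tpi_sub, tpi_sub, hy', hzh, tpi_iterate hlift, hvt]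
    abel
  set m := (⇑F)^[n] vh - zh - y' with hmdef
  have huball : zh + y' ∈ Metric.ball zh δ := by
    rw [Metric.mem_ball, dist_eq_norm, add_sub_cancel_left, hny', ← dist_eq_norm]
    exact hfv
  have h2 : ∀ k : ℕ, ‖(⇑F)^[k] (zh + y') - (⇑F)^[k] zh‖ ≤ 1/2 :=
    fun k => stepA hlift hzh hδ hst k _ huball
  refine ⟨m, hm, fun k => ?_⟩
  have hiter : (⇑F)^[k] ((⇑F)^[n] vh + -m) = (⇑F)^[k + n] vh + -m := by
    rw [iterate_lat hlift k _ ((ZLat 2).neg_mem hm), Function.iterate_add_apply]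
  have hzy : zh + y' = (⇑F)^[n] vh + -m := by rw [hmdef]; abel
  have h3 : ‖(⇑F)^[k + n] vh + -m - (⇑F)^[k] zh‖ ≤ 1/2 := by
    have := h2 k
    rwa [hzy, hiter] at this
  have h4 : ‖(⇑F)^[k + n] zh - (⇑F)^[k + n] vh‖ ≤ 1/2 := by
    rw [norm_sub_rev]; exact h1 (k + n)
  have hsplit : (⇑F)^[k + n] zh - (⇑F)^[k] zh - m
      = ((⇑F)^[k + n] zh - (⇑F)^[k + n] vh) + ((⇑F)^[k + n] vh + -m - (⇑F)^[k] zh) := by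
    abel
  rw [hsplit]
  calc ‖_ + _‖ ≤ _ + _ := norm_add_le _ _
  _ ≤ 1/2 + 1/2 := add_le_add h4 h3
  _ = 1 := by norm_num

lemma rel_pow {F : E 2 ≃ₜ E 2} (zh m : E 2) (n : ℕ) (b : ℝ)
    (hb : ∀ k : ℕ, ‖(⇑F)^[k + n] zh - (⇑F)^[k] zh - m‖ ≤ b) :
    ∀ q r : ℕ, ‖(⇑F)^[q * n + r] zh - (⇑F)^[r] zh - (q:ℝ) • m‖ ≤ q * b := by
  intro q
  induction q with
  | zero => intro r; simp
  | succ q ih =>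
    intro r
    have h1 := ih (n + r)
    have h2 := hb r
    rw [Nat.add_comm r n] at h2
    have hidx : (q + 1) * n + r = q * n + (n + r) := by ring
    rw [hidx]
    have hq1 : ((q + 1 : ℕ) : ℝ) • m = (q : ℝ) • m + m := by
      have : ((q + 1 : ℕ) : ℝ) = (q : ℝ) + 1 := by push_cast; ring
      rw [this, add_smul, one_smul]
    have hsplit : (⇑F)^[q * n + (n + r)] zh - (⇑F)^[r] zh - ((q + 1 : ℕ) : ℝ) • m
        = ((⇑F)^[q * n + (n + r)] zh - (⇑F)^[n + r] zh - (q : ℝ) • m)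
          + ((⇑F)^[n + r] zh - (⇑F)^[r] zh - m) := by
      rw [hq1]; abel
    rw [hsplit]
    calc ‖_ + _‖ ≤ _ + _ := norm_add_le _ _
    _ ≤ q * b + b := add_le_add h1 h2
    _ = (q + 1 : ℕ) * b := by push_cast; ring

lemma exists_C (F : E 2 ≃ₜ E 2) (zh : E 2) (n : ℕ) :
    ∃ C : ℝ, 0 ≤ C ∧ ∀ r, r < n → ‖(⇑F)^[r] zh - zh‖ ≤ C := by
  induction n with
  | zero => exact ⟨0, le_refl 0, fun r hr => absurd hr (Nat.not_lt_zero r)⟩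
  | succ k ih =>
    obtain ⟨C, hC0, hC⟩ := ih
    refine ⟨max C ‖(⇑F)^[k] zh - zh‖, le_trans hC0 (le_max_left _ _), ?_⟩
    intro r hr
    rcases Nat.lt_or_ge r k with h | h
    · exact le_trans (hC r h) (le_max_left _ _)
    · have hrk : r = k := by omega
      rw [hrk]
      exact le_max_right _ _

set_option maxHeartbeats 2000000 in
/-- Rotation vectors of points of the ball are pinned near `m/n`. -/
lemma rot_pin (hlift : IsLift F f) {z : T 2} {zh : E 2} (hzh : tpi 2 zh = z) {δ : ℝ}
    (hδ : 0 < δ)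
    (hst : ∀ n : ℕ, ∀ w ∈ Metric.ball z δ, dist ((⇑f)^[n] w) ((⇑f)^[n] z) ≤ 1/2)
    {n : ℕ} (hn : 1 ≤ n) {m : E 2} {b : ℝ} (hb0 : 0 ≤ b)
    (hrel : ∀ k : ℕ, ‖(⇑F)^[k + n] zh - (⇑F)^[k] zh - m‖ ≤ b)
    {ρ : E 2} (hρ : ρ ∈ rotU (⇑F) (Metric.ball z δ)) :
    ‖ρ - (n:ℝ)⁻¹ • m‖ ≤ b / n := by
  obtain ⟨N, zz, hNtop, hzz, hconv⟩ := hρ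
  obtain ⟨C, hC0, hC⟩ := exists_C F zh n
  set K := 1/2 + C + δ + ‖m‖ with hK
  have hKpos : (0:ℝ) ≤ K := by
    rw [hK]; linarith [norm_nonneg m]
  clear_value K
  have hnpos : (0:ℝ) < n := by exact_mod_cast hn
  have hbound : ∀ i, 1 ≤ N i →
      ‖(N i:ℝ)⁻¹ • ((⇑F)^[N i] (zz i) - zz i) - (n:ℝ)⁻¹ • m‖ ≤ b/n + K / N i := by
    intro i hNi
    have hz_i : tpi 2 (zz i) ∈ Metric.ball z δ := hzz i
    obtain ⟨y, hy, hny⟩ := exists_min_rep (tpi 2 (zz i) - z)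
    set w := zh + y with hw
    have hwz : tpi 2 w = tpi 2 (zz i) := by
      rw [hw, tpi_add, hzh, hy]; abel
    have hwball : w ∈ Metric.ball zh δ := by
      rw [Metric.mem_ball, dist_eq_norm, hw, add_sub_cancel_left, hny, ← dist_eq_norm]
      exact hz_i
    have hlat : zz i - w ∈ ZLat 2 := by
      rw [← tpi_eq_zero_iff, tpi_sub, hwz, sub_self]
    have heq : (⇑F)^[N i] (zz i) - zz i = (⇑F)^[N i] w - w := by
      have h1 : zz i = w + (zz i - w) := by abel
      have h2 : (⇑F)^[N i] (zz i) = (⇑F)^[N i] w + (zz i - w) := by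
        conv_lhs => rw [h1]
        rw [iterate_lat hlift _ _ hlat]
      rw [h2]; abel
    rw [heq]
    set Ni := N i with hNidef
    set q := Ni / n with hqdef
    set r := Ni % n with hrdef
    have hqr : q * n + r = Ni := by rw [mul_comm]; exact Nat.div_add_mod Ni n
    have hrn : r < n := Nat.mod_lt _ (by omega)
    have h1 : ‖(⇑F)^[Ni] w - (⇑F)^[Ni] zh‖ ≤ 1/2 := stepA hlift hzh hδ hst Ni w hwball
    have h2 : ‖(⇑F)^[Ni] zh - (⇑F)^[r] zh - (q:ℝ) • m‖ ≤ q * b := by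
      have h := rel_pow zh m n b hrel q r
      rwa [hqr] at h
    have h3 : ‖(⇑F)^[r] zh - zh‖ ≤ C := hC r hrn
    have h4 : ‖zh - w‖ ≤ δ := by
      rw [norm_sub_rev, ← dist_eq_norm]
      exact le_of_lt hwball
    have h5 : ‖(⇑F)^[Ni] w - w - (q:ℝ) • m‖ ≤ 1/2 + q*b + C + δ := by
      have hsplit : (⇑F)^[Ni] w - w - (q:ℝ) • m
          = (((⇑F)^[Ni] w - (⇑F)^[Ni] zh) + ((⇑F)^[Ni] zh - (⇑F)^[r] zh - (q:ℝ) • m)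
            + ((⇑F)^[r] zh - zh)) + (zh - w) := by abel
      rw [hsplit]
      have t1 := norm_add_le (((⇑F)^[Ni] w - (⇑F)^[Ni] zh)
        + ((⇑F)^[Ni] zh - (⇑F)^[r] zh - (q:ℝ) • m) + ((⇑F)^[r] zh - zh)) (zh - w)
      have t2 := norm_add_le (((⇑F)^[Ni] w - (⇑F)^[Ni] zh)
        + ((⇑F)^[Ni] zh - (⇑F)^[r] zh - (q:ℝ) • m)) ((⇑F)^[r] zh - zh)
      have t3 := norm_add_le ((⇑F)^[Ni] w - (⇑F)^[Ni] zh)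
        ((⇑F)^[Ni] zh - (⇑F)^[r] zh - (q:ℝ) • m)
      linarith
    have hNpos : (0:ℝ) < Ni := by
      have : (1:ℝ) ≤ (Ni:ℝ) := by exact_mod_cast hNi
      linarith
    have hsplit2 : (Ni:ℝ)⁻¹ • ((⇑F)^[Ni] w - w) - (n:ℝ)⁻¹ • m
        = (Ni:ℝ)⁻¹ • ((⇑F)^[Ni] w - w - (q:ℝ) • m) + ((q:ℝ)/Ni - 1/n) • m := by
      have hq : (0:ℝ) < Ni := hNpos
      module
    rw [hsplit2]
    have hs1 : ‖(Ni:ℝ)⁻¹ • ((⇑F)^[Ni] w - w - (q:ℝ) • m)‖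
        ≤ (Ni:ℝ)⁻¹ * (1/2 + q*b + C + δ) := by
      rw [norm_smul, Real.norm_eq_abs, abs_of_pos (inv_pos.2 hNpos)]
      exact mul_le_mul_of_nonneg_left h5 (le_of_lt (inv_pos.2 hNpos))
    have hcast : (q:ℝ) * n + r = Ni := by exact_mod_cast hqr
    have hqn : (q:ℝ) * n ≤ Ni := by
      have hr0 : (0:ℝ) ≤ (r:ℝ) := by positivity
      linarith [hcast]
    have hrn' : (r:ℝ) ≤ n := by exact_mod_cast le_of_lt hrn
    have habs : |(q:ℝ)/Ni - 1/n| ≤ 1/Ni := by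
      have hiNi : (0:ℝ) < 1/Ni := by positivity
      have u1 : (q:ℝ)/Ni ≤ 1/n := by
        rw [div_le_div_iff₀ hNpos hnpos]
        nlinarith
      have l1 : 1/(n:ℝ) ≤ ((q:ℝ)+1)/Ni := by
        rw [div_le_div_iff₀ hnpos hNpos]
        nlinarith
      have l2 : ((q:ℝ)+1)/Ni = (q:ℝ)/Ni + 1/Ni := by ring
      rw [abs_le]
      constructor <;> [linarith [l1, l2]; linarith [u1, hiNi]]
    have hs2 : ‖((q:ℝ)/Ni - 1/n) • m‖ ≤ (1/Ni) * ‖m‖ := by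
      rw [norm_smul, Real.norm_eq_abs]
      exact mul_le_mul_of_nonneg_right (by simpa using habs) (norm_nonneg m)
    have hqb : (Ni:ℝ)⁻¹ * (q*b) ≤ b/n := by
      rw [show (Ni:ℝ)⁻¹ * ((q:ℝ)*b) = ((q:ℝ)*b)/Ni from by ring,
        div_le_div_iff₀ hNpos hnpos]
      nlinarith
    calc ‖_ + _‖ ≤ _ + _ := norm_add_le _ _
    _ ≤ (Ni:ℝ)⁻¹ * (1/2 + q*b + C + δ) + (1/Ni) * ‖m‖ := add_le_add hs1 hs2
    _ ≤ b/n + K / Ni := by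
      rw [hK]
      have expand : (Ni:ℝ)⁻¹ * (1/2 + q*b + C + δ) + (1/Ni) * ‖m‖
          = (Ni:ℝ)⁻¹ * (q*b) + (1/2 + C + δ + ‖m‖)/Ni := by
        field_simp
        ring
      rw [expand]
      linarith [hqb]
  -- limit step
  have hfinal : ∀ ε > 0, ‖ρ - (n:ℝ)⁻¹ • m‖ ≤ b/n + ε := by
    intro ε hε
    obtain ⟨M, hM⟩ := exists_nat_ge (2*K/ε)
    have hev1 : ∀ᶠ i in atTop,
        dist ((N i:ℝ)⁻¹ • ((⇑F)^[N i] (zz i) - zz i)) ρ < ε/2 := by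
      have := hconv (Metric.ball_mem_nhds ρ (by positivity : (0:ℝ) < ε/2))
      simpa [Metric.mem_ball] using this
    have hev2 : ∀ᶠ i in atTop, max 1 M ≤ N i := hNtop.eventually_ge_atTop (max 1 M)
    obtain ⟨i, hi1, hi2⟩ := (hev1.and hev2).exists
    have hNi1 : 1 ≤ N i := le_trans (le_max_left _ _) hi2
    have hNiM : M ≤ N i := le_trans (le_max_right _ _) hi2
    have hb := hbound i hNi1
    have hchain : ‖ρ - (n:ℝ)⁻¹ • m‖
        ≤ dist ((N i:ℝ)⁻¹ • ((⇑F)^[N i] (zz i) - zz i)) ρ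
          + ‖(N i:ℝ)⁻¹ • ((⇑F)^[N i] (zz i) - zz i) - (n:ℝ)⁻¹ • m‖ := by
      rw [dist_eq_norm]
      have := norm_add_le (ρ - (N i:ℝ)⁻¹ • ((⇑F)^[N i] (zz i) - zz i))
        ((N i:ℝ)⁻¹ • ((⇑F)^[N i] (zz i) - zz i) - (n:ℝ)⁻¹ • m)
      rw [norm_sub_rev (((N i:ℝ)⁻¹ • ((⇑F)^[N i] (zz i) - zz i))) ρ]
      calc ‖ρ - (n:ℝ)⁻¹ • m‖ = ‖(ρ - (N i:ℝ)⁻¹ • ((⇑F)^[N i] (zz i) - zz i))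
          + ((N i:ℝ)⁻¹ • ((⇑F)^[N i] (zz i) - zz i) - (n:ℝ)⁻¹ • m)‖ := by abel_nf
      _ ≤ _ := this
    have hKN : K / N i ≤ ε/2 := by
      have hNpos : (0:ℝ) < N i := by
        have : (1:ℝ) ≤ (N i:ℝ) := by exact_mod_cast hNi1
        linarith
      have hMN : (M:ℝ) ≤ (N i:ℝ) := by exact_mod_cast hNiM
      rw [div_le_iff₀ hNpos]
      have h2K : 2*K ≤ ε * M := by
        rw [div_le_iff₀ hε] at hM
        linarith
      have hprod : ε * (M:ℝ) ≤ ε * (N i:ℝ) :=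
        mul_le_mul_of_nonneg_left hMN (le_of_lt hε)
      linarith
    linarith
  have h := le_of_forall_pos_le_add hfinal
  exact h

lemma interior_singleton_empty (x : E 2) : interior ({x} : Set (E 2)) = ∅ := by
  rw [Set.eq_empty_iff_forall_notMem]
  intro y hy
  have hyx : y ∈ ({x} : Set (E 2)) := interior_subset hy
  rw [Set.mem_singleton_iff] at hyx
  obtain ⟨r, hr0, hball⟩ := Metric.isOpen_iff.1 isOpen_interior y hy
  set p := y + (r/2) • EuclideanSpace.single (0 : Fin 2) (1:ℝ) with hp
  have hsingle : ‖EuclideanSpace.single (0 : Fin 2) (1:ℝ)‖ = 1 := by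
    rw [EuclideanSpace.norm_single]
    norm_num
  have hpball : p ∈ Metric.ball y r := by
    rw [Metric.mem_ball, dist_eq_norm, hp, add_sub_cancel_left, norm_smul, hsingle,
      Real.norm_eq_abs, abs_of_pos (by positivity : (0:ℝ) < r/2)]
    linarith
  have hpx : p ∈ ({x} : Set (E 2)) := interior_subset (hball hpball)
  rw [Set.mem_singleton_iff] at hpx
  have hp0 : (r/2) • EuclideanSpace.single (0:Fin 2) (1:ℝ) = 0 := by
    have hpy : p = y := by rw [hpx, hyx]
    rw [hp] at hpy
    exact add_eq_left.1 hpy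
  have hnz := congrArg norm hp0
  rw [norm_smul, hsingle, norm_zero, Real.norm_eq_abs,
    abs_of_pos (by positivity : (0:ℝ) < r/2)] at hnz
  simp at hnz
  linarith

lemma no_small_returns {f : T 2 ≃ₜ T 2} {z : T 2} {δ : ℝ} (hδ : 0 < δ)
    (hper : ∀ n : ℕ, 1 ≤ n → (⇑f)^[n] z ≠ z) (M : ℕ) :
    ∃ r : ℝ, 0 < r ∧ r ≤ δ ∧ ∀ j, 1 ≤ j → j ≤ M →
      ∀ v, dist v z < r → ¬ (dist ((⇑f)^[j] v) z < r) := by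
  induction M with
  | zero =>
    exact ⟨δ, hδ, le_refl δ, fun j h1 h2 => absurd (le_trans h1 h2) (by omega)⟩
  | succ k ih =>
    obtain ⟨r, hr0, hrδ, hr⟩ := ih
    set d := dist ((⇑f)^[k+1] z) z with hd
    have hd0 : 0 < d := dist_pos.2 (hper (k+1) (by omega))
    have hcont : ContinuousAt (⇑f)^[k+1] z := (f.continuous.iterate (k+1)).continuousAt
    obtain ⟨s, hs0, hs⟩ := Metric.continuousAt_iff.1 hcont (d/3) (by positivity)
    refine ⟨min r (min s (d/3)), by positivity, le_trans (min_le_left _ _) hrδ, ?_⟩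
    intro j hj1 hjk v hv hfv
    rcases Nat.lt_or_ge j (k+1) with h | h
    · exact hr j hj1 (by omega) v (lt_of_lt_of_le hv (min_le_left _ _))
        (lt_of_lt_of_le hfv (min_le_left _ _))
    · have hjk1 : j = k + 1 := by omega
      subst hjk1
      have h1 : dist ((⇑f)^[k+1] v) ((⇑f)^[k+1] z) < d/3 :=
        hs (lt_of_lt_of_le hv (le_trans (min_le_right _ _) (min_le_left _ _)))
      have h2 : dist ((⇑f)^[k+1] v) z < d/3 :=
        lt_of_lt_of_le hfv (le_trans (min_le_right _ _) (min_le_right _ _))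
      have h3 := dist_triangle ((⇑f)^[k+1] z) ((⇑f)^[k+1] v) z
      have h4 : dist ((⇑f)^[k+1] z) ((⇑f)^[k+1] v) = dist ((⇑f)^[k+1] v) ((⇑f)^[k+1] z) :=
        dist_comm _ _
      rw [← hd] at h3
      linarith

end Lift

end NoLyap

open NoLyap in
/-- **Proposition (no Lyapunov stability in the chaotic region, part (a)).**
If `f` is non-wandering and `ρ(F)` has non-empty interior, then no point of the
chaotic region `C(f)` is `1/2`-Lyapunov stable: for every `z ∈ C(f)` and every
`δ > 0` some point of `B_δ(z)` is moved at distance `> 1/2` from `f^n(z)` by some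
iterate `f^n`. -/
theorem chaotic_region_not_half_lyapunov_stable
    (F : E 2 ≃ₜ E 2) (f : T 2 ≃ₜ T 2) (hlift : IsLift F f)
    (hnw : ∀ V : Set (T 2), IsOpen V → V.Nonempty →
      ∃ n : ℕ, 1 ≤ n ∧ ((⇑f)^[n] '' V ∩ V).Nonempty)
    (hint : (interior (rotSet (⇑F))).Nonempty)
    (z : T 2)
    (hz : ∀ U : Set (T 2), IsOpen U → z ∈ U →
      (interior (convexHull ℝ (rotU (⇑F) U))).Nonempty)
    (δ : ℝ) (hδ : 0 < δ) :
    ∃ n : ℕ, ∃ w ∈ Metric.ball z δ, dist ((⇑f)^[n] w) ((⇑f)^[n] z) > 1 / 2 := by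
  by_contra hcon
  push_neg at hcon
  have hst : ∀ n : ℕ, ∀ w ∈ Metric.ball z δ, dist ((⇑f)^[n] w) ((⇑f)^[n] z) ≤ 1/2 :=
    fun n w hw => hcon n w hw
  obtain ⟨zh, hzh⟩ := QuotientAddGroup.mk_surjective z
  have hzh' : tpi 2 zh = z := hzh
  have hsub : ∀ ρ₁ ∈ rotU (⇑F) (Metric.ball z δ), ∀ ρ₂ ∈ rotU (⇑F) (Metric.ball z δ),
      ρ₁ = ρ₂ := by
    by_cases hper : ∃ n : ℕ, 1 ≤ n ∧ (⇑f)^[n] z = z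
    · -- periodic case: exact relation with b = 0
      obtain ⟨n, hn, hfz⟩ := hper
      have hmlat : (⇑F)^[n] zh - zh ∈ ZLat 2 := by
        rw [← tpi_eq_zero_iff, tpi_sub, tpi_iterate hlift, hzh', hfz, sub_self]
      have hrel : ∀ k : ℕ, ‖(⇑F)^[k + n] zh - (⇑F)^[k] zh - ((⇑F)^[n] zh - zh)‖ ≤ 0 := by
        intro k
        have habel : (⇑F)^[n] zh = zh + ((⇑F)^[n] zh - zh) := by abel
        have h1 : (⇑F)^[k + n] zh = (⇑F)^[k] zh + ((⇑F)^[n] zh - zh) := by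
          rw [Function.iterate_add_apply]
          calc (⇑F)^[k] ((⇑F)^[n] zh)
              = (⇑F)^[k] (zh + ((⇑F)^[n] zh - zh)) := congrArg _ habel
          _ = (⇑F)^[k] zh + ((⇑F)^[n] zh - zh) := iterate_lat hlift k zh hmlat
        rw [h1]
        simp
      intro ρ₁ h₁ ρ₂ h₂
      have e1 := rot_pin hlift hzh' hδ hst hn (le_refl (0:ℝ)) hrel h₁
      have e2 := rot_pin hlift hzh' hδ hst hn (le_refl (0:ℝ)) hrel h₂
      rw [zero_div] at e1 e2
      have f1 : ρ₁ = (n:ℝ)⁻¹ • ((⇑F)^[n] zh - zh) := sub_eq_zero.1 (norm_le_zero_iff.1 e1)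
      have f2 : ρ₂ = (n:ℝ)⁻¹ • ((⇑F)^[n] zh - zh) := sub_eq_zero.1 (norm_le_zero_iff.1 e2)
      rw [f1, f2]
    · -- aperiodic case: arbitrarily long return times
      push_neg at hper
      intro ρ₁ h₁ ρ₂ h₂
      have key : ∀ ε > (0:ℝ), ‖ρ₁ - ρ₂‖ ≤ 0 + ε := by
        intro ε hε
        obtain ⟨M, hM⟩ := exists_nat_gt (2/ε)
        obtain ⟨r, hr0, hrδ, hr⟩ := no_small_returns hδ hper M
        obtain ⟨n, hn1, hne⟩ := hnw (Metric.ball z r) Metric.isOpen_ball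
          ⟨z, Metric.mem_ball_self hr0⟩
        obtain ⟨x, hx1, hx2⟩ := hne
        obtain ⟨v, hv, rfl⟩ := hx1
        have hnM : M < n := by
          by_contra hle
          push_neg at hle
          exact hr n hn1 hle v (Metric.mem_ball.1 hv) (Metric.mem_ball.1 hx2)
        have hvδ : v ∈ Metric.ball z δ :=
          Metric.mem_ball.2 (lt_of_lt_of_le (Metric.mem_ball.1 hv) hrδ)
        have hfvδ : (⇑f)^[n] v ∈ Metric.ball z δ :=
          Metric.mem_ball.2 (lt_of_lt_of_le (Metric.mem_ball.1 hx2) hrδ)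
        obtain ⟨m, hmlat, hrel⟩ := return_rel hlift hzh' hδ hst hvδ hfvδ
        have e1 := rot_pin hlift hzh' hδ hst hn1 zero_le_one hrel h₁
        have e2 := rot_pin hlift hzh' hδ hst hn1 zero_le_one hrel h₂
        have hnpos : (0:ℝ) < n := by
          have : (1:ℝ) ≤ (n:ℝ) := by exact_mod_cast hn1
          linarith
        have tri : ‖ρ₁ - ρ₂‖ ≤ 1/n + 1/n := by
          have hsplit : ρ₁ - ρ₂ = (ρ₁ - (n:ℝ)⁻¹ • m) + ((n:ℝ)⁻¹ • m - ρ₂) := by abel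
          rw [hsplit]
          have h2' : ‖(n:ℝ)⁻¹ • m - ρ₂‖ ≤ 1/n := by
            rw [norm_sub_rev]; exact e2
          calc ‖_ + _‖ ≤ _ + _ := norm_add_le _ _
          _ ≤ 1/(n:ℝ) + 1/n := add_le_add e1 h2'
        have hlt : 2/(n:ℝ) ≤ ε := by
          have hcast : (M:ℝ) < (n:ℝ) := by exact_mod_cast hnM
          have h2n : 2 < ε * n := by
            rw [div_lt_iff₀ hε] at hM
            have : ε * (M:ℝ) ≤ ε * (n:ℝ) := mul_le_mul_of_nonneg_left
              (le_of_lt hcast) (le_of_lt hε)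
            nlinarith
          rw [div_le_iff₀ hnpos]
          nlinarith
        have : 1/(n:ℝ) + 1/n = 2/n := by ring
        rw [this] at tri
        linarith
      have h0 : ‖ρ₁ - ρ₂‖ ≤ 0 := le_of_forall_pos_le_add key
      exact sub_eq_zero.1 (norm_le_zero_iff.1 h0)
  have hIntNe := hz (Metric.ball z δ) Metric.isOpen_ball (Metric.mem_ball_self hδ)
  rcases Set.eq_empty_or_nonempty (rotU (⇑F) (Metric.ball z δ)) with hRe | ⟨ρ₀, hρ₀⟩
  · rw [hRe, convexHull_empty, interior_empty] at hIntNe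
    exact Set.not_nonempty_empty hIntNe
  · have hRsub : rotU (⇑F) (Metric.ball z δ) ⊆ {ρ₀} := fun ρ hρ => by
      rw [Set.mem_singleton_iff]; exact hsub ρ hρ ρ₀ hρ₀
    have h1 : convexHull ℝ (rotU (⇑F) (Metric.ball z δ)) ⊆ {ρ₀} := by
      have h := convexHull_mono hRsub (𝕜 := ℝ)
      rwa [convexHull_singleton] at h
    obtain ⟨x, hx⟩ := hIntNe
    have h2 := interior_mono h1 hx
    rw [interior_singleton_empty] at h2
    exact h2
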